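/- arXiv:2510.11846 — 5 statements merged into one kernel-verified Lean document; each statement's English description precedes it below -/
import Mathlib

section
/- For all natural numbers \tau \ge 1 and n with 1 \le n \le \tau - 1, \sum_{\sigma = \tau - 1 - n}^{\tau - 1} (-1)^{\tau - \sigma} \binom{\tau}{\sigma} (\tau - \sigma) \binom{\sigma}{n - (\tau - \sigma - 1)} = 0. -/
/-- For `τ ≥ 1` and `1 ≤ n ≤ τ - 1`,
`∑_{σ = τ-1-n}^{τ-1} (-1)^{τ-σ} C(τ, σ) (τ - σ) C(σ, n - (τ - σ - 1)) = 0`. -/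
theorem weighted_alternating_binomial_sum_eq_zero (τ n : ℕ) (hτ : 1 ≤ τ)
    (hn : 1 ≤ n) (hnτ : n ≤ τ - 1) :
    ∑ σ ∈ Finset.Icc (τ - 1 - n) (τ - 1),
        (-1 : ℤ) ^ (τ - σ) * (τ.choose σ) * (τ - σ : ℕ) *
          (σ.choose (n - (τ - σ - 1))) = 0 := by
  obtain ⟨m, rfl⟩ : ∃ m, τ = m + 1 := ⟨τ - 1, (Nat.succ_pred_eq_of_pos hτ).symm⟩
  simp only [Nat.add_sub_cancel] at hnτ ⊢
  have key : ∑ σ ∈ Finset.Icc (m - n) m,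
      (-1 : ℤ) ^ (m + 1 - σ) * ((m+1).choose σ) * ((m + 1 - σ : ℕ) : ℤ) *
        (σ.choose (n - (m + 1 - σ - 1)))
      = ∑ j ∈ Finset.range (n+1),
      (-1 : ℤ) ^ (j+1) * ((m+1).choose (j+1)) * ((j+1 : ℕ) : ℤ) *
        ((m-j).choose (n-j)) := by
    refine Finset.sum_nbij' (fun σ => m - σ) (fun j => m - j) ?_ ?_ ?_ ?_ ?_
    · intro σ hσ
      simp only [Finset.mem_Icc] at hσ
      simp only [Finset.mem_range]
      omega
    · intro j hj
      simp only [Finset.mem_range] at hj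
      simp only [Finset.mem_Icc]
      omega
    · intro σ hσ
      simp only [Finset.mem_Icc] at hσ
      omega
    · intro j hj
      simp only [Finset.mem_range] at hj
      omega
    · intro σ hσ
      simp only [Finset.mem_Icc] at hσ
      have h1 : m + 1 - σ = (m - σ) + 1 := by omega
      have h3 : (m+1).choose σ = (m+1).choose ((m - σ) + 1) := by
        rw [← Nat.choose_symm (by omega : σ ≤ m + 1)]
        congr 1
      have h4 : m - (m - σ) = σ := by omega
      rw [h4, h1, h3, Nat.add_sub_cancel]
  rw [key]
  have term_eq : ∀ j ∈ Finset.range (n+1),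
      (-1 : ℤ) ^ (j+1) * ((m+1).choose (j+1)) * ((j+1 : ℕ) : ℤ) *
        ((m-j).choose (n-j))
      = (-((m:ℤ)+1) * (m.choose n)) * ((-1 : ℤ) ^ j * (n.choose j)) := by
    intro j hj
    simp only [Finset.mem_range] at hj
    have hjn : j ≤ n := by omega
    have h1 : (m+1).choose (j+1) * (j+1) = (m+1) * m.choose j :=
      (Nat.add_one_mul_choose_eq m j).symm
    have h2 : m.choose j * (m-j).choose (n-j) = m.choose n * n.choose j := by
      have := Nat.choose_mul (n := m) (k := n) (s := j) hjn
      omega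
    have e0 : (m+1).choose (j+1) * (j+1) * (m-j).choose (n-j)
        = (m+1) * (m.choose n * n.choose j) := by
      rw [h1, mul_assoc, h2]
    calc (-1 : ℤ) ^ (j+1) * ((m+1).choose (j+1)) * ((j+1 : ℕ) : ℤ) * ((m-j).choose (n-j))
        = (-1 : ℤ) ^ (j+1) * (((m+1).choose (j+1) * (j+1) * (m-j).choose (n-j) : ℕ) : ℤ) := by
          push_cast; ring
      _ = (-1 : ℤ) ^ (j+1) * (((m+1) * (m.choose n * n.choose j) : ℕ) : ℤ) := by rw [e0]
      _ = (-((m:ℤ)+1) * (m.choose n)) * ((-1 : ℤ) ^ j * (n.choose j)) := by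
          push_cast; rw [pow_succ]; ring
  rw [Finset.sum_congr rfl term_eq, ← Finset.mul_sum,
    Int.alternating_sum_range_choose_of_ne (by omega : n ≠ 0), mul_zero]
end

section
/- Let \tau, s, n be natural numbers with n \ge 1, n \le s \le \tau. Then \sum_{\sigma = s - n}^{s} (-1)^{\tau - \sigma} \binom{\tau}{\sigma} \binom{\tau - \sigma}{\tau - s} \binom{\sigma}{n - (s - \sigma)} = 0. -/
lemma neg_one_pow_sub_aux (A i : ℕ) (h : i ≤ A) :
    (-1 : ℤ) ^ (A - i) = (-1) ^ A * (-1) ^ i := by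
  calc (-1 : ℤ) ^ (A - i) = (-1) ^ (A - i) * ((-1) ^ i * (-1) ^ i) := by
        rw [← pow_add, ← two_mul, pow_mul]; norm_num
    _ = (-1) ^ (A - i + i) * (-1) ^ i := by rw [← mul_assoc, ← pow_add]
    _ = (-1) ^ A * (-1) ^ i := by rw [Nat.sub_add_cancel h]

/-- For `1 ≤ n ≤ s ≤ τ`,
`∑_{σ = s-n}^{s} (-1)^{τ-σ} C(τ, σ) C(τ-σ, τ-s) C(σ, n - (s - σ)) = 0`. -/
theorem triple_alternating_binomial_sum_eq_zero (τ s n : ℕ)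
    (hn : 1 ≤ n) (hns : n ≤ s) (hsτ : s ≤ τ) :
    ∑ σ ∈ Finset.Icc (s - n) s,
        (-1 : ℤ) ^ (τ - σ) * (τ.choose σ) * ((τ - σ).choose (τ - s)) *
          (σ.choose (n - (s - σ))) = 0 := by
  have key : ∀ σ ∈ Finset.Icc (s - n) s,
      (-1 : ℤ) ^ (τ - σ) * (τ.choose σ) * ((τ - σ).choose (τ - s)) *
          (σ.choose (n - (s - σ)))
        = (-1 : ℤ) ^ (τ - σ) * ((τ.choose s) * (s.choose (s - n))) *
            (n.choose (σ - (s - n))) := by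
    intro σ hσ
    rw [Finset.mem_Icc] at hσ
    obtain ⟨h1, h2⟩ := hσ
    have e1 : σ.choose (n - (s - σ)) = σ.choose (s - n) :=
      Nat.choose_symm_of_eq_add (by omega)
    have e2 : τ.choose σ * (τ - σ).choose (τ - s) = τ.choose s * s.choose σ := by
      have h := Nat.choose_mul (n := τ) (k := s) (s := σ) h2
      have e2' : (τ - σ).choose (τ - s) = (τ - σ).choose (s - σ) :=
        Nat.choose_symm_of_eq_add (by omega)
      rw [e2', h]
    have e3 : s.choose σ * σ.choose (s - n) = s.choose (s - n) * n.choose (σ - (s - n)) := by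
      have h := Nat.choose_mul (n := s) (k := σ) (s := s - n) h1
      rwa [show s - (s - n) = n from by omega] at h
    have enat : τ.choose σ * (τ - σ).choose (τ - s) * σ.choose (n - (s - σ))
        = τ.choose s * s.choose (s - n) * n.choose (σ - (s - n)) := by
      rw [e1, e2, mul_assoc, e3, ← mul_assoc]
    calc (-1 : ℤ) ^ (τ - σ) * (τ.choose σ) * ((τ - σ).choose (τ - s)) *
          (σ.choose (n - (s - σ)))
        = (-1 : ℤ) ^ (τ - σ) *
            ((τ.choose σ * (τ - σ).choose (τ - s) * σ.choose (n - (s - σ)) : ℕ) : ℤ) := by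
          push_cast; ring
      _ = (-1 : ℤ) ^ (τ - σ) * ((τ.choose s) * (s.choose (s - n))) *
            (n.choose (σ - (s - n))) := by rw [enat]; push_cast; ring
  rw [Finset.sum_congr rfl key]
  have reindex : ∑ σ ∈ Finset.Icc (s - n) s,
      (-1 : ℤ) ^ (τ - σ) * ((τ.choose s) * (s.choose (s - n))) * (n.choose (σ - (s - n)))
      = ∑ i ∈ Finset.range (n + 1),
          (-1 : ℤ) ^ (τ - (s - n + i)) * ((τ.choose s) * (s.choose (s - n))) * (n.choose i) := by
    refine Finset.sum_nbij' (fun σ => σ - (s - n)) (fun i => s - n + i) ?_ ?_ ?_ ?_ ?_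
    · intro σ hσ; rw [Finset.mem_Icc] at hσ; rw [Finset.mem_range]; omega
    · intro i hi; rw [Finset.mem_range] at hi; rw [Finset.mem_Icc]; omega
    · intro σ hσ; rw [Finset.mem_Icc] at hσ; omega
    · intro i hi; rw [Finset.mem_range] at hi; omega
    · intro σ hσ; rw [Finset.mem_Icc] at hσ
      rw [show s - n + (σ - (s - n)) = σ from by omega]
  rw [reindex]
  have hpow : ∀ i ∈ Finset.range (n + 1),
      (-1 : ℤ) ^ (τ - (s - n + i)) * ((τ.choose s) * (s.choose (s - n))) * (n.choose i)
        = ((-1 : ℤ) ^ (τ - (s - n)) * ((τ.choose s) * (s.choose (s - n))))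
            * ((-1 : ℤ) ^ i * (n.choose i)) := by
    intro i hi
    rw [Finset.mem_range] at hi
    have h1 : τ - (s - n + i) = (τ - (s - n)) - i := by omega
    have h2 : i ≤ τ - (s - n) := by omega
    rw [h1, neg_one_pow_sub_aux _ _ h2]
    ring
  rw [Finset.sum_congr rfl hpow, ← Finset.mul_sum,
    Int.alternating_sum_range_choose_of_ne (by omega : n ≠ 0), mul_zero]
end

section
/- Let \tau, s, s', n be natural numbers with n \ge 1, s' \le s - n (so s' + n \le s \le \tau). Then \sum_{\sigma = s - n}^{s} (-1)^{\tau - \sigma} \binom{\tau}{\sigma} \binom{\sigma}{s'} \binom{\tau - \sigma}{\tau - s} \binom{\sigma - s'}{n - (s - \sigma)} = 0. -/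
lemma key_nat (s' i j b t : ℕ) :
    ((s'+j+b)+(i+t)).choose (s'+j+b) * ((s'+(j+b)).choose s') * ((t+i).choose t) * ((j+b).choose j)
  = (((s'+i+j+b)+t).choose (s'+i+j+b)) * ((s'+(i+j+b)).choose s') * (((i+j)+b).choose (i+j)) * ((i+j).choose i) := by
  have h : (((((s'+j+b)+(i+t)).choose (s'+j+b) * ((s'+(j+b)).choose s') * ((t+i).choose t) * ((j+b).choose j)) : ℕ) : ℚ)
      = ((((((s'+i+j+b)+t).choose (s'+i+j+b)) * ((s'+(i+j+b)).choose s') * (((i+j)+b).choose (i+j)) * ((i+j).choose i)) : ℕ) : ℚ) := by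
    push_cast
    rw [Nat.cast_add_choose, Nat.cast_add_choose, Nat.cast_add_choose, Nat.cast_add_choose,
        Nat.cast_add_choose, Nat.cast_add_choose, Nat.cast_add_choose, Nat.cast_add_choose]
    rw [show s'+j+b+(i+t) = s'+i+j+b+t by ring, show s'+(j+b) = s'+j+b by ring,
        show s'+(i+j+b) = s'+i+j+b by ring, show i+j+b = (i+j)+b by ring,
        show t+i = i+t by ring]
    have h1 : ((Nat.factorial (s'+j+b)) : ℚ) ≠ 0 := by positivity
    have h2 : ((Nat.factorial (i+t)) : ℚ) ≠ 0 := by positivity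
    have h3 : ((Nat.factorial (s'+i+j+b)) : ℚ) ≠ 0 := by positivity
    have h4 : ((Nat.factorial ((i+j)+b)) : ℚ) ≠ 0 := by positivity
    have h5 : ((Nat.factorial (i+j)) : ℚ) ≠ 0 := by positivity
    have h6 : ((Nat.factorial s') : ℚ) ≠ 0 := by positivity
    have h7 : ((Nat.factorial t) : ℚ) ≠ 0 := by positivity
    have h8 : ((Nat.factorial i) : ℚ) ≠ 0 := by positivity
    have h9 : ((Nat.factorial j) : ℚ) ≠ 0 := by positivity
    have h10 : ((Nat.factorial b) : ℚ) ≠ 0 := by positivity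
    field_simp
  exact_mod_cast h

/-- For `n ≥ 1`, `s' + n ≤ s ≤ τ`,
`∑_{σ = s-n}^{s} (-1)^{τ-σ} C(τ, σ) C(σ, s') C(τ-σ, τ-s) C(σ-s', n - (s - σ)) = 0`. -/
theorem quadruple_alternating_binomial_sum_eq_zero (τ s s' n : ℕ)
    (hn : 1 ≤ n) (hs' : s' + n ≤ s) (hsτ : s ≤ τ) :
    ∑ σ ∈ Finset.Icc (s - n) s,
        (-1 : ℤ) ^ (τ - σ) * (τ.choose σ) * (σ.choose s') *
          ((τ - σ).choose (τ - s)) * ((σ - s').choose (n - (s - σ))) = 0 := by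
  have himg : Finset.Icc (s - n) s = (Finset.range (n+1)).image (fun i => s - i) := by
    ext σ
    simp only [Finset.mem_Icc, Finset.mem_image, Finset.mem_range]
    constructor
    · rintro ⟨h1, h2⟩; exact ⟨s - σ, by omega, by omega⟩
    · rintro ⟨i, hi, rfl⟩; omega
  rw [himg, Finset.sum_image (by intro a ha b hb hab; simp only [Finset.mem_coe, Finset.mem_range] at ha hb hab; omega)]
  have key : ∀ i ∈ Finset.range (n+1),
      (-1 : ℤ) ^ (τ - (s - i)) * (τ.choose (s - i)) * ((s - i).choose s') *
          ((τ - (s - i)).choose (τ - s)) * ((s - i - s').choose (n - (s - (s - i))))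
      = ((-1 : ℤ) ^ (τ - s) * (τ.choose s) * (s.choose s') * ((s - s').choose n)) *
          ((-1 : ℤ) ^ i * (n.choose i)) := by
    intro i hi
    simp only [Finset.mem_range] at hi
    have hi' : i ≤ n := by omega
    set j := n - i with hj
    set b := s - s' - n with hb
    set t := τ - s with ht
    have e1 : τ.choose (s - i) = ((s'+j+b)+(i+t)).choose (s'+j+b) := by congr 1 <;> omega
    have e2 : (s - i).choose s' = (s'+(j+b)).choose s' := by congr 1; omega
    have e3 : (τ - (s - i)).choose (τ - s) = (t+i).choose t := by congr 1 <;> omega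
    have e4 : (s - i - s').choose (n - (s - (s - i))) = (j+b).choose j := by congr 1 <;> omega
    have e5 : τ.choose s = (((s'+i+j+b)+t)).choose (s'+i+j+b) := by congr 1 <;> omega
    have e6 : s.choose s' = (s'+(i+j+b)).choose s' := by congr 1; omega
    have e7 : (s - s').choose n = ((i+j)+b).choose (i+j) := by congr 1 <;> omega
    have e8 : n.choose i = (i+j).choose i := by congr 1; omega
    have esign : τ - (s - i) = (τ - s) + i := by omega
    rw [e1, e2, e3, e4, e5, e6, e7, e8, esign, pow_add]
    have hZ : (((s'+j+b)+(i+t)).choose (s'+j+b) * ((s'+(j+b)).choose s') * ((t+i).choose t) * ((j+b).choose j) : ℤ)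
        = ((((s'+i+j+b)+t)).choose (s'+i+j+b) * ((s'+(i+j+b)).choose s') * (((i+j)+b).choose (i+j)) * ((i+j).choose i) : ℤ) := by
      exact_mod_cast key_nat s' i j b t
    push_cast at hZ ⊢
    linear_combination ((-1:ℤ)^(τ-s) * (-1)^i) * hZ
  rw [Finset.sum_congr rfl key, ← Finset.mul_sum]
  have hzero := Int.alternating_sum_range_choose_of_ne (n := n) (by omega)
  simp only [hzero, mul_zero]
end

section
/- For every complex number w with |w| > 2 (or for every real w > 2), \frac{1}{2\pi} \int_{-2}^{2} \frac{\sqrt{4 - x^2}}{w - x} \, dx = \frac{w - \sqrt{w^2 - 4}}{2}, where the square root is the branch that is positive for real w > 2. -/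
open scoped Real

/-- The Stieltjes transform of the semicircle law: for real `w > 2`,
`(2π)⁻¹ ∫_{-2}^{2} √(4 - x²) / (w - x) dx = (w - √(w² - 4)) / 2`. -/
theorem semicircle_stieltjes_transform (w : ℝ) (hw : 2 < w) :
    (1 / (2 * π)) * ∫ x in (-2 : ℝ)..2, Real.sqrt (4 - x ^ 2) / (w - x)
      = (w - Real.sqrt (w ^ 2 - 4)) / 2 := by
  set s := Real.sqrt (w ^ 2 - 4) with hsdef
  have hw2 : (0:ℝ) < w ^ 2 - 4 := by nlinarith
  have hs0 : 0 < s := Real.sqrt_pos.mpr hw2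
  have hs2 : s ^ 2 = w ^ 2 - 4 := Real.sq_sqrt hw2.le
  set G : ℝ → ℝ := fun x => w * Real.arcsin (x / 2) - Real.sqrt (4 - x ^ 2)
      - s * Real.arcsin ((w * x - 4) / (2 * (w - x))) with hG
  have key : ∫ x in (-2:ℝ)..2, Real.sqrt (4 - x ^ 2) / (w - x) = G 2 - G (-2) := by
    apply intervalIntegral.integral_eq_sub_of_hasDerivAt_of_le (by norm_num)
    · -- continuity of G on Icc
      apply ContinuousOn.sub
      apply ContinuousOn.sub
      · exact (continuous_const.mul (Real.continuous_arcsin.comp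
          (continuous_id.div_const 2))).continuousOn
      · exact (Real.continuous_sqrt.comp (by continuity)).continuousOn
      · apply ContinuousOn.mul continuousOn_const
        apply Real.continuous_arcsin.comp_continuousOn
        apply ContinuousOn.div (by fun_prop) (by fun_prop)
        intro x hx
        have h2 : x ≤ 2 := hx.2
        have : 0 < w - x := by linarith
        positivity
    · intro x hx
      obtain ⟨hx1, hx2⟩ := hx
      have hd : 0 < w - x := by linarith
      have hr2 : (0:ℝ) < 4 - x ^ 2 := by nlinarith
      have hr0 : 0 < Real.sqrt (4 - x ^ 2) := Real.sqrt_pos.mpr hr2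
      have hr2' : Real.sqrt (4 - x ^ 2) ^ 2 = 4 - x ^ 2 := Real.sq_sqrt hr2.le
      set r := Real.sqrt (4 - x ^ 2) with hrdef
      -- piece A
      have e1 : Real.sqrt (1 - (x/2)^2) = r / 2 := by
        have h4 : Real.sqrt 4 = 2 := by
          rw [show (4:ℝ) = 2^2 by norm_num]; exact Real.sqrt_sq (by norm_num)
        rw [show (1 - (x/2)^2) = (4 - x^2) / 4 by ring, Real.sqrt_div hr2.le, h4]
      have hA : HasDerivAt (fun y => w * Real.arcsin (y / 2)) (w / r) x := by
        have h1 : x / 2 ≠ -1 := by intro h; field_simp at h; linarith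
        have h2 : x / 2 ≠ 1 := by intro h; field_simp at h; linarith
        have := ((Real.hasDerivAt_arcsin h1 h2).comp x
          ((hasDerivAt_id x).div_const 2)).const_mul w
        refine this.congr_deriv ?_; symm
        rw [e1]; field_simp
      -- piece B
      have hB : HasDerivAt (fun y => Real.sqrt (4 - y ^ 2)) (-x / r) x := by
        have hin : HasDerivAt (fun y : ℝ => 4 - y ^ 2) (-(2 * x)) x := by
          have := (hasDerivAt_const x (4:ℝ)).sub (hasDerivAt_pow 2 x)
          exact this.congr_deriv (by norm_num)
        have := (Real.hasDerivAt_sqrt hr2.ne').comp x hin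
        refine this.congr_deriv ?_; symm
        field_simp; ring
      -- piece C
      have hune : (2 : ℝ) * (w - x) ≠ 0 := by positivity
      have hu : HasDerivAt (fun y => (w * y - 4) / (2 * (w - y)))
          ((w * 1 * (2 * (w - x)) - (w * x - 4) * (2 * (0 - 1))) / (2 * (w - x)) ^ 2) x := by
        exact (((hasDerivAt_id x).const_mul w).sub_const 4).div
          (((hasDerivAt_const x w).sub (hasDerivAt_id x)).const_mul 2) hune
      set u := (w * x - 4) / (2 * (w - x)) with hudef
      have husq : (w * x - 4) ^ 2 < (2 * (w - x)) ^ 2 := by nlinarith [mul_pos hr2 hw2]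
      have hu1 : u < 1 := by
        rw [hudef, div_lt_one (by positivity)]; nlinarith
      have hu2 : -1 < u := by
        rw [hudef, lt_div_iff₀ (by positivity)]; nlinarith
      have e2 : Real.sqrt (1 - u ^ 2) = r * s / (2 * (w - x)) := by
        have : 1 - u ^ 2 = ((4 - x ^ 2) * (w ^ 2 - 4)) / (2 * (w - x)) ^ 2 := by
          rw [hudef]; field_simp; ring
        rw [this, Real.sqrt_div (by positivity), Real.sqrt_mul hr2.le,
          Real.sqrt_sq (by positivity)]
      have hC : HasDerivAt (fun y => s * Real.arcsin ((w * y - 4) / (2 * (w - y))))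
          (s ^ 2 / (r * (w - x))) x := by
        have := ((Real.hasDerivAt_arcsin hu2.ne' hu1.ne).comp x hu).const_mul s
        refine this.congr_deriv ?_; symm
        rw [e2, show (w * 1 * (2 * (w - x)) - (w * x - 4) * (2 * (0 - 1))) = 2 * s ^ 2 by
          rw [hs2]; ring]
        field_simp
      have := (hA.sub hB).sub hC
      refine this.congr_deriv ?_; symm
      rw [hs2]
      field_simp
      linear_combination hr2'
    · -- integrability
      apply ContinuousOn.intervalIntegrable
      apply ContinuousOn.div ((Real.continuous_sqrt.comp (by continuity)).continuousOn)
        (by fun_prop)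
      intro x hx
      rw [Set.uIcc_of_le (by norm_num : (-2:ℝ) ≤ 2)] at hx
      have h2 : x ≤ 2 := hx.2
      have : 0 < w - x := by linarith
      positivity
  rw [key, hG]
  have hv2 : (w * 2 - 4) / (2 * (w - 2)) = 1 := by
    rw [div_eq_one_iff_eq (by nlinarith : (2:ℝ) * (w - 2) ≠ 0)]; ring
  have hvm2 : (w * (-2) - 4) / (2 * (w - (-2))) = -1 := by
    rw [div_eq_iff (by nlinarith : (2:ℝ) * (w - -2) ≠ 0)]; ring
  simp only [hv2, hvm2]
  norm_num [Real.arcsin_one, Real.arcsin_neg_one, Real.sqrt_eq_zero']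
  field_simp [Real.pi_ne_zero]
  ring
end

section
/- For every real z < 1, \frac{1}{2\pi} \int_{-2}^{2} \frac{(x^2 + 1)\sqrt{4 - x^2}}{2 - z - (z - 1) x^2} \, dx = \frac{5z - 6 + (3 - 2z)\sqrt{(2 - z)(6 - 5z)}}{2 (z - 1)^2 \sqrt{(2 - z)(6 - 5z)}}. -/
open scoped Real

noncomputable def Haux (z x : ℝ) : ℝ :=
  (1/(1-z)) * (x * Real.sqrt (4 - x^2) / 2 + 2 * Real.arcsin (x/2))
  - (1/(1-z)^2) * (Real.sqrt (6-5*z) / Real.sqrt (2-z) *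
      Real.arcsin (Real.sqrt (6-5*z) * x / (2 * Real.sqrt (2 - z + (1-z)*x^2)))
    - Real.arcsin (x/2))

set_option maxHeartbeats 1000000 in
lemma Haux_hasDerivAt (z : ℝ) (hz : z < 1) {x : ℝ} (hx : x ∈ Set.Ioo (-2:ℝ) 2) :
    HasDerivAt (Haux z)
      (((x ^ 2 + 1) * Real.sqrt (4 - x ^ 2)) / (2 - z - (z - 1) * x ^ 2)) x := by
  obtain ⟨hx1, hx2⟩ := hx
  have hb : (0:ℝ) < 1 - z := by linarith
  have ha : (0:ℝ) < 2 - z := by linarith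
  have hM : (0:ℝ) < 6 - 5*z := by linarith
  have h4 : (0:ℝ) < 4 - x^2 := by nlinarith
  have hq : (0:ℝ) < 2 - z + (1-z)*x^2 := by nlinarith
  set s := Real.sqrt (4 - x^2) with hs_def
  set p := Real.sqrt (2 - z + (1-z)*x^2) with hp_def
  set m := Real.sqrt (6 - 5*z) with hm_def
  set r := Real.sqrt (2 - z) with hr_def
  have hs : 0 < s := Real.sqrt_pos.2 h4
  have hp : 0 < p := Real.sqrt_pos.2 hq
  have hm : 0 < m := Real.sqrt_pos.2 hM
  have hr : 0 < r := Real.sqrt_pos.2 ha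
  have hs2 : s^2 = 4 - x^2 := Real.sq_sqrt h4.le
  have hp2 : p^2 = 2 - z + (1-z)*x^2 := Real.sq_sqrt hq.le
  have hm2 : m^2 = 6 - 5*z := Real.sq_sqrt hM.le
  have hr2 : r^2 = 2 - z := Real.sq_sqrt ha.le
  -- derivative of sqrt(4 - x^2)
  have dinner : HasDerivAt (fun x : ℝ => 4 - x^2) (-(2*x)) x := by
    simpa using (hasDerivAt_pow 2 x).const_sub 4
  have dsqrt : HasDerivAt (fun x : ℝ => Real.sqrt (4 - x^2)) (-x / s) x := by
    have := (Real.hasDerivAt_sqrt h4.ne').comp x dinner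
    refine this.congr_deriv (Eq.symm ?_)
    field_simp
    ring
  -- derivative of arcsin (x/2)
  have harc_ne1 : x/2 ≠ 1 := by intro h; nlinarith [h]
  have harc_ne1' : x/2 ≠ -1 := by intro h; nlinarith [h]
  have dhalf : HasDerivAt (fun x : ℝ => x/2) (1/2) x := by
    simpa using (hasDerivAt_id x).div_const 2
  have hsqhalf : Real.sqrt (1 - (x/2)^2) = s/2 := by
    rw [show 1 - (x/2)^2 = (s/2)^2 by nlinarith [hs2], Real.sqrt_sq (by positivity)]
  have darcsin_half : HasDerivAt (fun x : ℝ => Real.arcsin (x/2)) (1/s) x := by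
    have := (Real.hasDerivAt_arcsin harc_ne1' harc_ne1).comp x dhalf
    refine this.congr_deriv (Eq.symm ?_)
    rw [hsqhalf]
    field_simp
  -- derivative of p = sqrt(2 - z + (1-z) x^2)
  have dqinner : HasDerivAt (fun x : ℝ => 2 - z + (1-z)*x^2) ((1-z)*(2*x)) x := by
    have h1 : HasDerivAt (fun x : ℝ => (1-z)*x^2) ((1-z)*(2*x)) x := by
      simpa using ((hasDerivAt_pow 2 x).const_mul (1-z))
    simpa using h1.const_add (2 - z)
  have dp : HasDerivAt (fun x : ℝ => Real.sqrt (2 - z + (1-z)*x^2)) ((1-z)*x/p) x := by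
    have := (Real.hasDerivAt_sqrt hq.ne').comp x dqinner
    refine this.congr_deriv (Eq.symm ?_)
    field_simp
    ring
  -- derivative of φ = m x / (2 p)
  have dnum : HasDerivAt (fun x : ℝ => m * x) m x := by
    simpa using (hasDerivAt_id x).const_mul m
  have dden : HasDerivAt (fun x : ℝ => 2 * Real.sqrt (2 - z + (1-z)*x^2))
      (2*((1-z)*x/p)) x := dp.const_mul 2
  have hden_ne : 2 * p ≠ 0 := by positivity
  have dphi : HasDerivAt (fun x : ℝ => m * x / (2 * Real.sqrt (2 - z + (1-z)*x^2)))
      ((m * (2*p) - m*x*(2*((1-z)*x/p))) / (2*p)^2) x := by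
    exact dnum.div dden (by simpa [← hp_def] using hden_ne)
  -- φ bounds
  set φ := m * x / (2 * p) with hφ_def
  have hφ2 : 1 - φ^2 = (r*s/(2*p))^2 := by
    rw [hφ_def]
    field_simp
    nlinarith [hs2, hp2, hm2, hr2]
  have hφlt : φ^2 < 1 := by
    have : (0:ℝ) < (r*s/(2*p))^2 := by positivity
    nlinarith [hφ2]
  have hφ_ne1 : φ ≠ 1 := by intro h; rw [h] at hφlt; norm_num at hφlt
  have hφ_ne1' : φ ≠ -1 := by intro h; rw [h] at hφlt; norm_num at hφlt
  have hsqφ : Real.sqrt (1 - φ^2) = r*s/(2*p) := by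
    rw [hφ2, Real.sqrt_sq (by positivity)]
  have darcφ : HasDerivAt (fun x : ℝ =>
      Real.arcsin (m * x / (2 * Real.sqrt (2 - z + (1-z)*x^2))))
      (m * r / ((2 - z + (1-z)*x^2) * s)) x := by
    have := (Real.hasDerivAt_arcsin hφ_ne1' hφ_ne1).comp x dphi
    refine this.congr_deriv (Eq.symm ?_)
    rw [hsqφ]
    field_simp
    linear_combination (4*s*m*p^3) * hr2 + ((-4)*x^2*s*m*p + 4*x^2*z*s*m*p) * hp2 + ((1)*r^2 + (-4)*s*p*m*r^2 + (-2) + (1)*z + (1)*x^2*z + (-1)*x^2 + (8)*s*p*m + (-4)*z*s*p*m + (-4)*x^2*z*s*p*m + (4)*x^2*s*p*m) * hp2 + ((-1)*z + (2) + (-1)*x^2*z + (1)*x^2 + (4)*z*s*p*m + (-8)*s*p*m + (4)*x^2*z*s*p*m + (-4)*x^2*s*p*m) * hr2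
  -- assemble
  have dA : HasDerivAt (fun x : ℝ => x * Real.sqrt (4 - x^2) / 2 + 2 * Real.arcsin (x/2))
      (s/2 + x * (-x/s) / 2 + 2 * (1/s)) x := by
    have h1 : HasDerivAt (fun x : ℝ => x * Real.sqrt (4 - x^2) / 2)
        ((1 * s + x * (-x/s)) / 2) x := ((hasDerivAt_id x).mul dsqrt).div_const 2
    have h2 := darcsin_half.const_mul 2
    refine (h1.add h2).congr_deriv (Eq.symm ?_)
    ring
  have dB := darcφ.const_mul (m / r)
  have dC := (dA.const_mul (1/(1-z))).sub
    ((dB.sub darcsin_half).const_mul (1/(1-z)^2))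
  have : HasDerivAt (Haux z) _ x := dC
  refine this.congr_deriv (Eq.symm ?_)
  have hden2 : 2 - z - (z-1)*x^2 = 2 - z + (1-z)*x^2 := by ring
  rw [hden2]
  field_simp
  linear_combination ((-48)*s*r + (8)*s*m^2*r + (112)*z*s*r + (-12)*z*s*m^2*r + (-4)*z*s^3*r + (-84)*z^2*s*r + (4)*z^2*s*m^2*r + (10)*z^2*s^3*r + (20)*z^3*s*r + (-8)*z^3*s^3*r + (2)*z^4*s^3*r + (-24)*x^2*s*r + (4)*x^2*s*m^2*r + (4)*x^2*s^3*r + (68)*x^2*z*s*r + (-8)*x^2*z*s*m^2*r + (-16)*x^2*z*s^3*r + (-64)*x^2*z^2*s*r + (4)*x^2*z^2*s*m^2*r + (24)*x^2*z^2*s^3*r + (20)*x^2*z^3*s*r + (-16)*x^2*z^3*s^3*r + (4)*x^2*z^4*s^3*r + (2)*x^4*s^3*r + (-8)*x^4*z*s^3*r + (12)*x^4*z^2*s^3*r + (-8)*x^4*z^3*s^3*r + (2)*x^4*z^4*s^3*r) * hs2 + ((32)*s*r + (-48)*z*s*r + (16)*z^2*s*r + (8)*x^2*s*r + (-20)*x^2*z*s*r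 + (12)*x^2*z^2*s*r + (-4)*x^4*s*r + (8)*x^4*z*s*r + (-4)*x^4*z^2*s*r) * hm2 + ((1)*x^2 + (-2)*x^2*z + (1)*x^2*z^2 + (-68)*x^2*z*s*r + (8)*x^2*z*s*m^2*r + (64)*x^2*z^2*s*r + (-4)*x^2*z^2*s*m^2*r + (-20)*x^2*z^3*s*r + (24)*x^2*s*r + (-4)*x^2*s*m^2*r + (16)*x^2*z*s^3*r + (-24)*x^2*z^2*s^3*r + (16)*x^2*z^3*s^3*r + (-4)*x^2*z^4*s^3*r + (-4)*x^2*s^3*r + (8)*x^4*z*s^3*r + (-12)*x^4*z^2*s^3*r + (8)*x^4*z^3*s^3*r + (-2)*x^4*z^4*s^3*r + (-2)*x^4*s^3*r + (-1)*z + (1)*z^2 + (-112)*z*s*r + (12)*z*s*m^2*r + (84)*z^2*s*r + (-4)*z^2*s*m^2*r + (-20)*z^3*s*r + (48)*s*r + (-8)*s*m^2*r + (4)*z*s^3*r + (-10)*z^2*s^3*r + (8)*z^3*s^3*r + (-2)*z^4*s^3*r) * hs2 + ((2) + (-8)*x^4*z*s*r + (20)*x^2*z*s*r + (4)*x^4*z^2*s*r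 + (-12)*x^2*z^2*s*r + (4)*x^4*s*r + (-8)*x^2*s*r + (48)*z*s*r + (-16)*z^2*s*r + (-32)*s*r) * hm2

/-- For real `z < 1`,
`(2π)⁻¹ ∫_{-2}^{2} (x²+1)√(4-x²) / (2 - z - (z-1)x²) dx
  = (5z - 6 + (3 - 2z)√((2-z)(6-5z))) / (2(z-1)² √((2-z)(6-5z)))`. -/
theorem gue_limit_shape_integral (z : ℝ) (hz : z < 1) :
    (1 / (2 * π)) *
        ∫ x in (-2 : ℝ)..2,
          ((x ^ 2 + 1) * Real.sqrt (4 - x ^ 2)) / (2 - z - (z - 1) * x ^ 2)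
      = (5 * z - 6 + (3 - 2 * z) * Real.sqrt ((2 - z) * (6 - 5 * z))) /
          (2 * (z - 1) ^ 2 * Real.sqrt ((2 - z) * (6 - 5 * z))) := by
  have hb : (0:ℝ) < 1 - z := by linarith
  have ha : (0:ℝ) < 2 - z := by linarith
  have hM : (0:ℝ) < 6 - 5*z := by linarith
  set m := Real.sqrt (6 - 5*z) with hm_def
  set r := Real.sqrt (2 - z) with hr_def
  have hm : 0 < m := Real.sqrt_pos.2 hM
  have hr : 0 < r := Real.sqrt_pos.2 ha
  have hm2 : m^2 = 6 - 5*z := Real.sq_sqrt hM.le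
  have hr2 : r^2 = 2 - z := Real.sq_sqrt ha.le
  have hqd : ∀ x : ℝ, 0 < 2 - z - (z-1)*x^2 := fun x => by nlinarith [sq_nonneg x]
  have hqd' : ∀ x : ℝ, 0 < 2 - z + (1-z)*x^2 := fun x => by nlinarith [sq_nonneg x]
  have hcont : Continuous (fun x : ℝ =>
      ((x ^ 2 + 1) * Real.sqrt (4 - x ^ 2)) / (2 - z - (z - 1) * x ^ 2)) := by
    apply Continuous.div
    · exact (((continuous_pow 2).add continuous_const).mul
        (Real.continuous_sqrt.comp (by continuity)))
    · continuity
    · exact fun x => (hqd x).ne'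
  have hHcont : Continuous (Haux z) := by
    unfold Haux
    have hc1 : Continuous fun x : ℝ => 2 * Real.sqrt (2 - z + (1-z)*x^2) := by
      exact continuous_const.mul (Real.continuous_sqrt.comp (by continuity))
    have hc2 : Continuous fun x : ℝ => m * x / (2 * Real.sqrt (2 - z + (1-z)*x^2)) := by
      apply Continuous.div (continuous_const.mul continuous_id) hc1
      intro x
      have := Real.sqrt_pos.2 (hqd' x)
      positivity
    have hc3 : Continuous fun x : ℝ => Real.arcsin (x/2) :=
      Real.continuous_arcsin.comp (continuous_id.div_const 2)
    apply Continuous.sub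
    · exact continuous_const.mul
        ((((continuous_id.mul (Real.continuous_sqrt.comp (by continuity))).div_const 2)).add
          (continuous_const.mul hc3))
    · exact continuous_const.mul
        ((continuous_const.mul (Real.continuous_arcsin.comp hc2)).sub hc3)
  have key : ∫ x in (-2:ℝ)..2,
      ((x ^ 2 + 1) * Real.sqrt (4 - x ^ 2)) / (2 - z - (z - 1) * x ^ 2)
      = Haux z 2 - Haux z (-2) := by
    apply intervalIntegral.integral_eq_sub_of_hasDeriv_right_of_le (by norm_num)
      hHcont.continuousOn
      (fun x hx => (Haux_hasDerivAt z hz hx).hasDerivWithinAt)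
      (hcont.intervalIntegrable _ _)
  rw [key]
  have h0 : Real.sqrt (4 - (2:ℝ)^2) = 0 := by norm_num
  have h0' : Real.sqrt (4 - (-2:ℝ)^2) = 0 := by norm_num
  have hin2 : 2 - z + (1-z)*(2:ℝ)^2 = 6 - 5*z := by ring
  have hin2' : 2 - z + (1-z)*(-2:ℝ)^2 = 6 - 5*z := by ring
  have hφ2 : m * 2 / (2 * m) = 1 := by field_simp
  have hφ2' : m * (-2) / (2 * m) = -1 := by field_simp
  have e2 : Haux z 2 = (1/(1-z)) * (2 * (π/2))
      - (1/(1-z)^2) * (m / r * (π/2) - π/2) := by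
    unfold Haux
    rw [h0, hin2, ← hm_def, hφ2, ← hr_def]
    norm_num [Real.arcsin_one]
  have e2' : Haux z (-2) = (1/(1-z)) * (2 * (-(π/2)))
      - (1/(1-z)^2) * (m / r * (-(π/2)) + π/2) := by
    unfold Haux
    rw [h0', hin2', ← hm_def, hφ2', ← hr_def]
    norm_num [Real.arcsin_neg_one, Real.arcsin_neg, Real.arcsin_one]
  rw [e2, e2']
  have hS : Real.sqrt ((2 - z) * (6 - 5 * z)) = r * m := Real.sqrt_mul ha.le _
  rw [hS]
  have hπ : (π : ℝ) ≠ 0 := Real.pi_ne_zero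
  have hzb : z - 1 ≠ 0 := by intro h; nlinarith
  field_simp
  linear_combination ((-64)*r^2*π + (384)*z*r^2*π + (-960)*z^2*r^2*π + (1280)*z^3*r^2*π + (-960)*z^4*r^2*π + (384)*z^5*r^2*π + (-64)*z^6*r^2*π) * hm2 + ((-2) + (4)*z + (-384)*z*r^2*π + (-2)*z^2 + (960)*z^2*r^2*π + (-1280)*z^3*r^2*π + (960)*z^4*r^2*π + (-384)*z^5*r^2*π + (64)*z^6*r^2*π + (64)*r^2*π) * hm2
end
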